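/- arXiv:1401.5842 — 2 statements merged into one kernel-verified Lean document; each statement's English description precedes it below -/
import Mathlib

section
/- Let P be a reducible lossy VASS whose control flow graph is a single strongly connected component with a unique entry location l_0 that is also its unique exit point, let 𝒯 = CFA(P) contain one transition τ_π = c_π for each loop-path π of P, and suppose the enumeration τ_1,…,τ_k of 𝒯 together with variables y_1,…,y_k satisfies the ranking condition. Fix an initial valuation σ_0 and define Bound(τ_i) recursively by Bound(τ_i) = ( σ_0(y_i) + Σ_{j : τ_j(y_i) > 0} Bound(τ_j) · τ_j(y_i) ) / k_i, where k_i = −τ_i(y_i) > 0 and τ(y) denotes the component of the vector τ corresponding to variable y (this recursion is well-founded, since any τ_j with τ_j(y_i) > 0 satisfies j < i). Then for every i and every finite trace of P that starts at (l_0, σ_0) and ends at location l_0, the underlying path contains at most Bound(τ_i) instances of the loop-path π_i from which τ_i was obtained; i.e., Bound(τ_i) is a path-bound for π_i. -/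
open scoped BigOperators

/-- Update vectors in `ℤⁿ`. -/
abbrev Upd (n : ℕ) := Fin n → ℤ

/-- Valuations of the variables (values are natural numbers). -/
abbrev Valu (n : ℕ) := Fin n → ℕ

/-- An edge (transition) of a VASS: source location, update vector, target location. -/
abbrev VEdge (n : ℕ) (L : Type*) := L × Upd n × L

/-- A lossy vector addition system with states over `n` variables and locations `L`. -/
structure VASS (n : ℕ) (L : Type*) where
  E : Set (VEdge n L)

namespace VASS

variable {n : ℕ} {L : Type*}

/-- `FPath P a p b`: the list of edges `p` is a finite path of `P` from `a` to `b`. -/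
inductive FPath (P : VASS n L) : L → List (VEdge n L) → L → Prop
  | nil (a : L) : FPath P a [] a
  | cons {a b c : L} {d : Upd n} {p : List (VEdge n L)} :
      (a, d, b) ∈ P.E → FPath P b p c → FPath P a ((a, d, b) :: p) c

/-- `x` occurs among the locations of the path `p` starting at location `a`. -/
def Visits (a : L) (p : List (VEdge n L)) (x : L) : Prop :=
  x = a ∨ ∃ e ∈ p, e.2.2 = x

/-- `a` dominates `b` (w.r.t. the entry location):
every path from the entry to `b` includes `a`. -/
def Dominates (P : VASS n L) (entry a b : L) : Prop :=
  ∀ p : List (VEdge n L), P.FPath entry p b → Visits entry p a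

/-- An edge `l₁ → l₂` is a back edge if `l₂` dominates `l₁`. -/
def BackEdge (P : VASS n L) (entry : L) (e : VEdge n L) : Prop :=
  e ∈ P.E ∧ P.Dominates entry e.2.2 e.1

/-- All locations are reachable from the entry location. -/
def EntryReach (P : VASS n L) (entry : L) : Prop :=
  ∀ x : L, ∃ p, P.FPath entry p x

/-- `P` is reducible: the graph becomes acyclic after removing all back edges. -/
def Reducible (P : VASS n L) (entry : L) : Prop :=
  ∀ (a : L) (p : List (VEdge n L)), (∀ e ∈ p, ¬ P.BackEdge entry e) → P.FPath a p a → p = []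

/-- `h` is a loop header: the target of some back edge. -/
def LoopHeader (P : VASS n L) (entry h : L) : Prop :=
  ∃ e, P.BackEdge entry e ∧ e.2.2 = h

/-- The natural loop of the loop header `h`: all locations `x` dominated by `h` such that
there is a back edge `m → h` and a path from `x` to `m` that does not contain `h`. -/
def NaturalLoop (P : VASS n L) (entry h : L) : Set L :=
  {x | P.Dominates entry h x ∧ ∃ e, P.BackEdge entry e ∧ e.2.2 = h ∧
    ∃ p, P.FPath x p e.1 ∧ ∀ e' ∈ p, e'.2.2 ≠ h}

/-- `p` is a loop-path at loop header `l`: a simple cyclic path starting and ending at `l`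
that visits only locations inside the natural loop of `l`. -/
def LoopPath (P : VASS n L) (entry l : L) (p : List (VEdge n L)) : Prop :=
  P.LoopHeader entry l ∧ P.FPath l p l ∧ p ≠ [] ∧ (p.map Prod.fst).Nodup ∧
    ∀ x, Visits l p x → x ∈ P.NaturalLoop entry l

/-- The contracted update of a path: the sum of the update vectors along the path. -/
def contractUpd (p : List (VEdge n L)) : Upd n :=
  (p.map (fun e => e.2.1)).sum

/-- Control flow abstraction: the transition system containing the contracted update
of every loop-path of `P`. -/
def CFA (P : VASS n L) (entry : L) : Set (Upd n) :=
  {c | ∃ l p, P.LoopPath entry l p ∧ c = contractUpd p}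

/-- `InstanceAux P h π ν D`: `ν` is an instance of the loop-path `π` (whose header is `h`),
interleaving the designated transitions of `π` with cyclic filler paths avoiding `h`;
`D` is the set of positions in `ν` of the designated transitions of `π`. -/
inductive InstanceAux (P : VASS n L) (h : L) :
    List (VEdge n L) → List (VEdge n L) → Set ℕ → Prop
  | single (e : VEdge n L) : InstanceAux P h [e] [e] {0}
  | cons (e : VEdge n L) (q rest ν : List (VEdge n L)) (D : Set ℕ) :
      P.FPath e.2.2 q e.2.2 → e.2.2 ≠ h → (∀ e' ∈ q, e'.2.2 ≠ h) →
      InstanceAux P h rest ν D →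
      InstanceAux P h (e :: rest) (e :: (q ++ ν)) (insert 0 ((fun m => m + q.length + 1) '' D))

/-- `ν` is an instance of the loop-path `π`, with `D` the positions of the
designated transitions of `π` inside `ν`. -/
def IsInstance (P : VASS n L) (π ν : List (VEdge n L)) (D : Set ℕ) : Prop :=
  ∃ e rest, π = e :: rest ∧ P.InstanceAux e.1 π ν D

/-- The path `p` contains an instance of `π` starting at position `i` and of length `k`. -/
def InstanceAt (P : VASS n L) (π p : List (VEdge n L)) (i k : ℕ) : Prop :=
  i + k ≤ p.length ∧ 1 ≤ k ∧ ∃ D, P.IsInstance π ((p.drop i).take k) D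

/-- The number of instances of the loop-path `π` contained in the path `p`. -/
noncomputable def numInstances (P : VASS n L) (π p : List (VEdge n L)) : ℕ :=
  {q : ℕ × ℕ | P.InstanceAt π p q.1 q.2}.ncard

/-- The transition occurrence at position `t` of the path `p` belongs to the instance of
the loop-path `π` contained in `p` at position `i` with length `k` (i.e. `t` is one of the
designated transitions of that instance). -/
def BelongsAt (P : VASS n L) (π p : List (VEdge n L)) (i k t : ℕ) : Prop :=
  i + k ≤ p.length ∧ 1 ≤ k ∧ i ≤ t ∧ t < i + k ∧
    ∃ D, P.IsInstance π ((p.drop i).take k) D ∧ (t - i) ∈ D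

/-- An infinite trace of the VASS `P`. -/
def InfTrace (P : VASS n L) (locs : ℕ → L) (upds : ℕ → Upd n) (vals : ℕ → Valu n) : Prop :=
  ∀ i, (locs i, upds i, locs (i+1)) ∈ P.E ∧
    ∀ j, (vals (i+1) j : ℤ) ≤ (vals i j : ℤ) + upds i j

/-- `P` is terminating: it has no infinite trace. -/
def Terminating (P : VASS n L) : Prop :=
  ¬ ∃ locs upds vals, P.InfTrace locs upds vals

/-- The valuations `vals` form a trace of `P` along the finite path `p`. -/
def FinTraceVals (P : VASS n L) (p : List (VEdge n L)) (vals : ℕ → Valu n) : Prop :=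
  ∀ (i : ℕ) (hi : i < p.length), ∀ j,
    (vals (i+1) j : ℤ) ≤ (vals i j : ℤ) + (p.get ⟨i, hi⟩).2.1 j

end VASS

/-- An enumeration `τ₁,…,τ_k` of the transition system `T` together with variables
`y₁,…,y_k` satisfies the ranking condition of the `Ranking` algorithm:
`τᵢ ⊨ yᵢ' < yᵢ`, and `τⱼ ⊨ yᵢ' ≤ yᵢ` for all `j ≥ i`. -/
def RankingCondition {n : ℕ} (T : Set (Upd n)) {k : ℕ}
    (τ : Fin k → Upd n) (y : Fin k → Fin n) : Prop :=
  Function.Injective τ ∧ Set.range τ = T ∧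
    (∀ i, τ i (y i) < 0) ∧ ∀ i j : Fin k, i ≤ j → τ j (y i) ≤ 0

/-- An infinite lossy execution of the transition system `T`. -/
def LossyExec {n : ℕ} (T : Set (Upd n)) (v : ℕ → Valu n) (d : ℕ → Upd n) : Prop :=
  ∀ m, d m ∈ T ∧ ∀ j, (v (m+1) j : ℤ) ≤ (v m j : ℤ) + d m j

/-- A finite lossy execution `v 0, …, v N` of the transition system `T`. -/
def FinLossyExec {n : ℕ} (T : Set (Upd n)) (N : ℕ) (v : ℕ → Valu n) (d : ℕ → Upd n) : Prop :=
  ∀ m < N, d m ∈ T ∧ ∀ j, (v (m+1) j : ℤ) ≤ (v m j : ℤ) + d m j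

/-- The bound computed by the `Bound` algorithm for transition `τ i`:
`Bound(τᵢ) = (σ₀(yᵢ) + Σ_{j : τⱼ(yᵢ) > 0} Bound(τⱼ) · τⱼ(yᵢ)) / kᵢ` with `kᵢ = −τᵢ(yᵢ)`
(the recursion runs over `j < i`, which under the ranking condition coincides with the
set of `j` with `τⱼ(yᵢ) > 0`, since any `τⱼ` with `τⱼ(yᵢ) > 0` satisfies `j < i`). -/
noncomputable def RankBound {n k : ℕ} (τ : Fin k → Upd n) (y : Fin k → Fin n)
    (σ0 : Valu n) : Fin k → ℚ
  | i =>
    ((σ0 (y i) : ℚ) +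
      ∑ j ∈ (Finset.univ.filter (fun j : Fin k => j < i ∧ 0 < τ j (y i))).attach,
        RankBound τ y σ0 j.1 * ((τ j.1 (y i) : ℚ))) / ((-(τ i (y i)) : ℤ) : ℚ)
  termination_by i => i.1
  decreasing_by
    have hj := j.2
    simp only [Finset.mem_filter, Finset.mem_univ, true_and] at hj
    exact hj.1

namespace VASS

variable {n : ℕ} {L : Type*} {P : VASS n L}

theorem FPath.append_ {a b c : L} {p q : List (VEdge n L)}
    (h1 : P.FPath a p b) (h2 : P.FPath b q c) : P.FPath a (p ++ q) c := by
  induction h1 with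
  | nil => simpa using h2
  | cons he _ ih => exact FPath.cons he (ih h2)

theorem FPath.split_ {a c : L} {p q : List (VEdge n L)}
    (h : P.FPath a (p ++ q) c) : ∃ b, P.FPath a p b ∧ P.FPath b q c := by
  induction p generalizing a with
  | nil => exact ⟨a, FPath.nil a, by simpa using h⟩
  | cons e p ih =>
    cases h with
    | cons he hp =>
      obtain ⟨b, h1, h2⟩ := ih hp
      exact ⟨b, FPath.cons he h1, h2⟩

theorem FPath.start {a b : L} {e : VEdge n L} {p : List (VEdge n L)}
    (h : P.FPath a (e :: p) b) : a = e.1 := by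
  cases h; rfl

theorem FPath.eq_of_nil {a b : L} (h : P.FPath a ([] : List (VEdge n L)) b) : a = b := by
  cases h; rfl

theorem FPath.tail_ {a b : L} {e : VEdge n L} {p : List (VEdge n L)}
    (h : P.FPath a (e :: p) b) : P.FPath e.2.2 p b := by
  cases h; assumption

theorem FPath.head_mem_E {a b : L} {e : VEdge n L} {p : List (VEdge n L)}
    (h : P.FPath a (e :: p) b) : e ∈ P.E := by
  cases h; assumption

theorem FPath.mem_E {a b : L} {p : List (VEdge n L)}
    (h : P.FPath a p b) : ∀ e ∈ p, e ∈ P.E := by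
  induction h with
  | nil => simp
  | cons he _ ih =>
    intro e hm
    rcases List.mem_cons.1 hm with h' | h'
    · subst h'; assumption
    · exact ih e h'

theorem FPath.end_ {a b : L} {p : List (VEdge n L)} (h : P.FPath a p b) (hne : p ≠ []) :
    (p.getLast hne).2.2 = b := by
  induction h with
  | nil => exact absurd rfl hne
  | cons he hp ih =>
    rename_i a' b' c' d' p'
    cases p' with
    | nil => cases hp; simp
    | cons f q => simpa [List.getLast_cons] using ih (by simp)

/-- the location sequence of the targets of a path. -/
theorem FPath.targets_eq {a b : L} {p : List (VEdge n L)} (h : P.FPath a p b) :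
    p.map (fun e => e.2.2) = (p.map Prod.fst ++ [b]).tail := by
  induction h with
  | nil => rfl
  | cons he hp ih =>
    rename_i a' b' c' d' p'
    cases hp with
    | nil => simp
    | cons he' hp' =>
      simp only [List.map_cons, List.cons_append, List.tail_cons] at ih ⊢
      simp [ih]

theorem FPath.visits_end {a b : L} {p : List (VEdge n L)} (h : P.FPath a p b) :
    Visits a p b := by
  induction h with
  | nil => exact Or.inl rfl
  | cons he hp ih =>
    rcases ih with h' | ⟨e, he', ht⟩
    · exact Or.inr ⟨_, List.mem_cons_self, h'.symm⟩
    · exact Or.inr ⟨e, List.mem_cons_of_mem _ he', ht⟩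

theorem dom_self {l0 a : L} : P.Dominates l0 a a := fun _ hp => hp.visits_end

theorem dom_entry {l0 a : L} : P.Dominates l0 l0 a := fun _ _ => Or.inl rfl

/-- Lemma E: if `w` dominates `u` and there is a path from `z` to `u` avoiding `w`
as a target, then `w` dominates `z`. -/
theorem dom_of_suffix {l0 w u z : L} {ρ : List (VEdge n L)}
    (hdom : P.Dominates l0 w u) (hρ : P.FPath z ρ u) (hav : ∀ f ∈ ρ, f.2.2 ≠ w) :
    P.Dominates l0 w z := by
  intro A hA
  rcases hdom (A ++ ρ) (hA.append_ hρ) with h' | ⟨e, he, ht⟩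
  · exact Or.inl h'
  · rcases List.mem_append.1 he with h' | h'
    · exact Or.inr ⟨e, h', ht⟩
    · exact absurd ht (hav e h')

theorem dom_antisymm {l0 a b : L} (hreach : ∀ x, ∃ p, P.FPath l0 p x)
    (hab : P.Dominates l0 a b) (hba : P.Dominates l0 b a) : a = b := by
  obtain ⟨p, hp⟩ := hreach a
  -- strong induction on length of a path to `a`
  suffices H : ∀ m, ∀ p : List (VEdge n L), p.length ≤ m → P.FPath l0 p a → a = b by
    exact H p.length p le_rfl hp
  intro m
  induction m with
  | zero =>
    intro p hlen hp
    have : p = [] := List.eq_nil_of_length_eq_zero (Nat.le_zero.1 hlen)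
    subst this
    have ha : a = l0 := (hp.eq_of_nil).symm
    subst ha
    rcases hba [] (FPath.nil a) with h' | ⟨e, he, _⟩
    · exact h'.symm
    · simp at he
  | succ m ih =>
    intro p hlen hp
    rcases hba p hp with h' | ⟨e, he, ht⟩
    · -- b = l0
      subst h'
      rcases hab [] (FPath.nil b) with h' | ⟨e, he, _⟩
      · exact h'
      · simp at he
    · -- split p at e
      obtain ⟨p1, p2, rfl⟩ := List.append_of_mem he
      obtain ⟨x, h1, h2⟩ := hp.split_
      have hx : x = e.1 := h2.start
      subst hx
      have hb : P.FPath l0 (p1 ++ [e]) b := by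
        refine h1.append_ ?_
        have hE := h2.head_mem_E
        obtain ⟨s, d, t⟩ := e
        simp only at ht
        subst ht
        exact FPath.cons hE (FPath.nil _)
      rcases hab (p1 ++ [e]) hb with h' | ⟨e', he', ht'⟩
      · -- a = l0
        subst h'
        rcases hba [] (FPath.nil a) with h'' | ⟨e'', he'', _⟩
        · exact h''.symm
        · simp at he''
      · rcases List.mem_append.1 he' with h' | h'
        · -- shorter path to a
          obtain ⟨q1, q2, rfl⟩ := List.append_of_mem h'
          obtain ⟨x, g1, g2⟩ := h1.split_
          have hx : x = e'.1 := g2.start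
          subst hx
          have ha : P.FPath l0 (q1 ++ [e']) a := by
            refine g1.append_ ?_
            have hE := g2.head_mem_E
            obtain ⟨s, d, t⟩ := e'
            simp only at ht'
            subst ht'
            exact FPath.cons hE (FPath.nil _)
          refine ih (q1 ++ [e']) ?_ ha
          have h2 := hlen
          simp only [List.length_append, List.length_cons, List.length_nil] at h2 ⊢
          omega
        · -- e' = e, so a = b
          simp only [List.mem_singleton] at h'
          subst h'
          rw [← ht', ht]

end VASS


namespace VASS

variable {n : ℕ} {L : Type*} {P : VASS n L}

theorem contract_nil : contractUpd ([] : List (VEdge n L)) = 0 := rfl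

theorem contract_cons (e : VEdge n L) (p : List (VEdge n L)) :
    contractUpd (e :: p) = e.2.1 + contractUpd p := by
  simp [contractUpd]

theorem contract_append (p q : List (VEdge n L)) :
    contractUpd (p ++ q) = contractUpd p + contractUpd q := by
  simp [contractUpd]

/-- From any position in a simple walk, the remaining walk avoids the start `w`
as a target. -/
theorem walk_avoid {w u : L} {t : List (VEdge n L)}
    (ht : P.FPath w t u) (hnd : (t.map Prod.fst).Nodup) (hu : u ∉ t.map Prod.fst)
    (x : L) (hx : x = w ∨ x ∈ t.map Prod.fst ∨ x = u) :
    ∃ ρ, P.FPath x ρ u ∧ ∀ f ∈ ρ, f.2.2 ≠ w := by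
  rcases hx with hxw | hx | hxu
  · -- x = w, take the whole walk
    refine ⟨t, by rw [hxw]; exact ht, fun f hf hfw => ?_⟩
    have htg := ht.targets_eq
    have hmm : f.2.2 ∈ t.map (fun e => e.2.2) := List.mem_map_of_mem hf
    rw [htg] at hmm
    cases t with
    | nil => simp at hf
    | cons g t' =>
      have hw : w = g.1 := ht.start
      simp only [List.map_cons, List.cons_append, List.tail_cons] at hmm
      rw [hfw] at hmm
      rcases List.mem_append.1 hmm with h' | h'
      · simp only [List.map_cons] at hnd
        exact (List.nodup_cons.1 hnd).1 (hw ▸ h')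
      · simp only [List.mem_singleton] at h'
        exact hu (by rw [← h', hw]; simp)
  · -- x is a source inside t
    obtain ⟨f, hf, rfl⟩ := List.mem_map.1 hx
    obtain ⟨r1, r2, rfl⟩ := List.append_of_mem hf
    obtain ⟨z, g1, g2⟩ := ht.split_
    have hz : z = f.1 := g2.start
    subst hz
    refine ⟨f :: r2, g2, fun g hg hgw => ?_⟩
    have htg := g2.targets_eq
    have : g.2.2 ∈ (f :: r2).map (fun e => e.2.2) := List.mem_map_of_mem hg
    rw [htg] at this
    simp only [List.map_cons, List.cons_append, List.tail_cons] at this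
    rw [hgw] at this
    -- w occurs as a source in r1 ++ [f], hence not in r2 nor equal to u
    have hw : w ∈ (r1 ++ [f]).map Prod.fst := by
      cases r1 with
      | nil =>
        have : w = f.1 := ht.start
        simp [this]
      | cons g0 r1' =>
        have : w = g0.1 := ht.start
        simp [this]
    have hsplit : (r1 ++ f :: r2).map Prod.fst
        = (r1 ++ [f]).map Prod.fst ++ r2.map Prod.fst := by simp
    rw [hsplit] at hnd hu
    have hdisj := (List.nodup_append.1 hnd).2.2
    rcases List.mem_append.1 this with h' | h'
    · exact hdisj w hw w h' rfl
    · simp only [List.mem_singleton] at h'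
      exact hu (h' ▸ List.mem_append.2 (Or.inl hw))
  · exact ⟨[], by rw [hxu]; exact FPath.nil u, by simp⟩

/-- Rotating a simple cycle to a back edge target yields a loop path. -/
theorem rot_loop_path {l0 v : L} {s : List (VEdge n L)}
    (hred : P.Reducible l0) (hs : P.FPath v s v) (hne : s ≠ [])
    (hnd : (s.map Prod.fst).Nodup) :
    ∃ w s', P.LoopPath l0 w s' ∧ contractUpd s' = contractUpd s := by
  -- get a back edge on s
  have hbe : ∃ e ∈ s, P.BackEdge l0 e := by
    by_contra hcon
    push_neg at hcon
    exact hne (hred v s hcon hs)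
  obtain ⟨be, hbe_mem, hBE⟩ := hbe
  obtain ⟨s1, s2, rfl⟩ := List.append_of_mem hbe_mem
  obtain ⟨z, h1, h2⟩ := hs.split_
  have hz : z = be.1 := h2.start
  subst hz
  have hEbe : be ∈ P.E := h2.head_mem_E
  have h2' : P.FPath be.2.2 s2 v := h2.tail_
  set w := be.2.2 with hw
  set u := be.1 with huu
  -- the rotated walk
  have hts : P.FPath w (s2 ++ s1) u := h2'.append_ h1
  have hsrc : (s1 ++ be :: s2).map Prod.fst
      = s1.map Prod.fst ++ u :: s2.map Prod.fst := by simp [huu]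
  have hperm : ((s1 ++ be :: s2).map Prod.fst).Perm
      (((s2 ++ s1).map Prod.fst) ++ [u]) := by
    rw [hsrc]
    refine (List.perm_middle).trans ?_
    refine ((List.perm_append_comm).cons u).trans ?_
    simpa using (List.perm_append_singleton u
      (s2.map Prod.fst ++ s1.map Prod.fst)).symm
  have hndt : (((s2 ++ s1).map Prod.fst) ++ [u]).Nodup := hperm.nodup hnd
  have hnd2 : ((s2 ++ s1).map Prod.fst).Nodup := (List.nodup_append.1 hndt).1
  have hu_not : u ∉ (s2 ++ s1).map Prod.fst := by
    intro hmem
    exact (List.nodup_append.1 hndt).2.2 u hmem u (by simp) rfl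
  have hdom : P.Dominates l0 w u := hBE.2
  -- the loop path
  refine ⟨w, (s2 ++ s1) ++ [be], ?_, ?_⟩
  · refine ⟨⟨be, hBE, rfl⟩, ?_, by simp, ?_, ?_⟩
    · -- path
      refine hts.append_ ?_
      obtain ⟨ub, db, wb⟩ := be
      exact FPath.cons hEbe (FPath.nil _)
    · -- nodup
      have : ((s2 ++ s1) ++ [be]).map Prod.fst
          = ((s2 ++ s1).map Prod.fst) ++ [u] := by simp [huu]
      rw [this]
      exact hndt
    · -- natural loop
      intro x hx
      have hx' : x = w ∨ x ∈ (s2 ++ s1).map Prod.fst ∨ x = u := by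
        rcases hx with hxw | ⟨f, hf, hfx⟩
        · exact Or.inl hxw
        · have hpath : P.FPath w ((s2 ++ s1) ++ [be]) w := by
            refine hts.append_ ?_
            obtain ⟨ub, db, wb⟩ := be
            exact FPath.cons hEbe (FPath.nil _)
          have htg := hpath.targets_eq
          have hmem : f.2.2 ∈ ((s2 ++ s1) ++ [be]).map (fun e => e.2.2) :=
            List.mem_map_of_mem hf
          rw [htg] at hmem
          have hmem2 : f.2.2 ∈ ((s2 ++ s1) ++ [be]).map Prod.fst ++ [w] :=
            List.mem_of_mem_tail hmem
          rw [← hfx]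
          simp only [List.map_append, List.map_cons, List.map_nil] at hmem2
          rcases List.mem_append.1 hmem2 with h'' | h''
          · rcases List.mem_append.1 h'' with h3 | h3
            · right; left; simpa using h3
            · right; right; simpa using h3
          · left; simpa using h''
      obtain ⟨ρ, hρ, hav⟩ := walk_avoid hts hnd2 hu_not x hx'
      have hdx : P.Dominates l0 w x := dom_of_suffix hdom hρ hav
      exact ⟨hdx, be, hBE, rfl, ρ, hρ, hav⟩
  · -- contract equality
    rw [contract_append, contract_append]
    have h3 : contractUpd (s1 ++ be :: s2)
        = contractUpd s1 + (be.2.1 + contractUpd s2) := by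
      rw [contract_append, contract_cons]
    rw [h3, contract_cons, contract_nil]
    abel

theorem map_eq_append_split {α β : Type*} {f : α → β} :
    ∀ (l : List α) (A B : List β), l.map f = A ++ B →
      ∃ l1 l2, l = l1 ++ l2 ∧ l1.map f = A ∧ l2.map f = B := by
  intro l A
  induction A generalizing l with
  | nil => exact fun B h => ⟨[], l, by simpa using h⟩
  | cons x A ih =>
    intro B h
    cases l with
    | nil => simp at h
    | cons e l' =>
      simp only [List.map_cons, List.cons_append, List.cons.injEq] at h
      obtain ⟨l1, l2, rfl, h1, h2⟩ := ih l' B h.2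
      exact ⟨e :: l1, l2, by simp, by simp [h.1, h1], h2⟩

theorem exists_first_dup {α : Type*} :
    ∀ (l : List α), ¬ l.Nodup →
      ∃ (l1 : List α) (x : α) (l2 l3 : List α),
        l = l1 ++ x :: l2 ++ x :: l3 ∧ (l1 ++ x :: l2).Nodup := by
  intro l
  induction l with
  | nil => intro h; exact absurd List.nodup_nil h
  | cons y t ih =>
    intro h
    by_cases ht : t.Nodup
    · have hy : y ∈ t := by
        by_contra hy
        exact h (List.nodup_cons.2 ⟨hy, ht⟩)
      obtain ⟨l2, l3, rfl⟩ := List.append_of_mem hy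
      refine ⟨[], y, l2, l3, by simp, ?_⟩
      simp only [List.nil_append, List.nodup_cons]
      exact ⟨fun hc => (List.nodup_append.1 ht).2.2 y hc y (by simp) rfl,
        (List.nodup_append.1 ht).1⟩
    · obtain ⟨l1, x, l2, l3, rfl, hnd⟩ := ih ht
      by_cases hy : y ∈ l1 ++ x :: l2
      · obtain ⟨q1, q2, hq⟩ := List.append_of_mem hy
        refine ⟨[], y, q1, q2 ++ x :: l3, ?_, ?_⟩
        · rw [show l1 ++ x :: l2 ++ x :: l3 = (l1 ++ x :: l2) ++ x :: l3 by simp, hq]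
          simp
        · rw [hq] at hnd
          simp only [List.nil_append, List.nodup_cons]
          rw [List.nodup_append] at hnd
          exact ⟨fun hc => hnd.2.2 y hc y (by simp) rfl, hnd.1⟩
      · refine ⟨y :: l1, x, l2, l3, by simp, ?_⟩
        rw [List.cons_append, List.nodup_cons]
        exact ⟨hy, hnd⟩

/-- multiset decomposition of a cycle into loop paths -/
theorem multiset_decomp {l0 : L} (hred : P.Reducible l0) :
    ∀ (N : ℕ) (c : List (VEdge n L)) (a : L), c.length ≤ N → P.FPath a c a →
      ∃ lps : List (List (VEdge n L)),
        (∀ lp ∈ lps, ∃ h, P.LoopPath l0 h lp) ∧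
        contractUpd c = (lps.map contractUpd).sum := by
  intro N
  induction N with
  | zero =>
    intro c a hlen _
    have : c = [] := List.eq_nil_of_length_eq_zero (Nat.le_zero.1 hlen)
    subst this
    exact ⟨[], by simp, by simp [contract_nil]⟩
  | succ N ih =>
    intro c a hlen hc
    cases hnil : c with
    | nil => exact ⟨[], by simp, by simp [hnil, contract_nil]⟩
    | cons e0 c0 =>
    rw [← hnil]
    by_cases hD : (c.map Prod.fst).Nodup
    · obtain ⟨w, s', hlp, hctr⟩ := rot_loop_path hred hc (by rw [hnil]; simp) hD
      exact ⟨[s'], by simpa using ⟨w, hlp⟩, by simp [hctr]⟩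
    · obtain ⟨M1, x, M2, M3, hmap, hnd1⟩ := exists_first_dup _ hD
      rw [List.append_assoc, List.cons_append] at hmap
      obtain ⟨c1, c4, rfl, hm1, hm4⟩ :=
        map_eq_append_split c M1 (x :: (M2 ++ x :: M3)) hmap
      cases c4 with
      | nil => simp at hm4
      | cons e1 c5 =>
        simp only [List.map_cons, List.cons.injEq, List.cons_append] at hm4
        obtain ⟨he1, hm5⟩ := hm4
        obtain ⟨c2, c6, rfl, hm2, hm6⟩ := map_eq_append_split c5 M2 (x :: M3) hm5
        cases c6 with
        | nil => simp at hm6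
        | cons e2 c3 =>
          simp only [List.map_cons, List.cons.injEq] at hm6
          obtain ⟨he2, _⟩ := hm6
          -- paths
          obtain ⟨z1, g1, g2⟩ := hc.split_
          have hz1 : z1 = e1.1 := g2.start
          subst hz1
          have g2' : P.FPath e1.2.2 (c2 ++ e2 :: c3) a := g2.tail_
          obtain ⟨z2, g3, g4⟩ := g2'.split_
          have hz2 : z2 = e2.1 := g4.start
          subst hz2
          have hE1 : e1 ∈ P.E := g2.head_mem_E
          -- the simple cycle s = e1 :: c2 from x to x
          have hs : P.FPath e1.1 (e1 :: c2) e1.1 := by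
            have hg3 : P.FPath e1.2.2 c2 e1.1 := by
              rw [he2.trans he1.symm] at g3; exact g3
            obtain ⟨u1, d1, w1⟩ := e1
            exact FPath.cons hE1 hg3
          have hnds : ((e1 :: c2).map Prod.fst).Nodup := by
            have : (e1 :: c2).map Prod.fst = x :: M2 := by
              simp [he1, hm2]
            rw [this]
            have := hnd1
            rw [List.nodup_append] at this
            exact this.2.1
          obtain ⟨w, s', hlp, hctr⟩ := rot_loop_path hred hs (by simp) hnds
          -- the shorter cycle c' = c1 ++ e2 :: c3
          have hc' : P.FPath a (c1 ++ e2 :: c3) a := by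
            refine g1.append_ ?_
            rw [he1.trans he2.symm]
            exact g4
          have hlen' : (c1 ++ e2 :: c3).length ≤ N := by
            have := hlen
            simp only [List.length_append, List.length_cons] at this ⊢
            omega
          obtain ⟨lps, hlps, hsum⟩ := ih (c1 ++ e2 :: c3) a hlen' hc'
          refine ⟨s' :: lps, ?_, ?_⟩
          · intro lp hlp'
            rcases List.mem_cons.1 hlp' with rfl | h'
            · exact ⟨w, hlp⟩
            · exact hlps lp h'
          · simp only [List.map_cons, List.sum_cons]
            rw [hctr, ← hsum]
            simp only [contract_append, contract_cons]
            abel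

end VASS


namespace VASS

variable {n : ℕ} {L : Type*} {P : VASS n L}

theorem fpath_cons' {e : VEdge n L} {t : List (VEdge n L)} {y : L}
    (hE : e ∈ P.E) (ht : P.FPath e.2.2 t y) : P.FPath e.1 (e :: t) y := by
  obtain ⟨a, d, b⟩ := e
  exact FPath.cons hE ht

theorem FPath.src_cases {z y : L} {t : List (VEdge n L)} (h : P.FPath z t y) :
    ∀ f ∈ t, f.1 = z ∨ ∃ g ∈ t, g.2.2 = f.1 := by
  induction h with
  | nil => simp
  | cons he hp ih =>
    rename_i a b c d t'
    intro f hf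
    rcases List.mem_cons.1 hf with rfl | hf'
    · exact Or.inl rfl
    · rcases ih f hf' with h' | ⟨g, hg, hg'⟩
      · exact Or.inr ⟨_, List.mem_cons_self, h'.symm⟩
      · exact Or.inr ⟨g, List.mem_cons_of_mem _ hg, hg'⟩

theorem InstanceAux.shape {h : L} {π ν : List (VEdge n L)} {D : Set ℕ}
    (hI : P.InstanceAux h π ν D) : ∃ e π' ν', π = e :: π' ∧ ν = e :: ν' := by
  cases hI with
  | single e => exact ⟨e, [], [], rfl, rfl⟩
  | cons e q rest ν' D _ _ _ _ => exact ⟨e, rest, q ++ ν', rfl, rfl⟩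

theorem InstanceAux.ne_nil {h : L} {π ν : List (VEdge n L)} {D : Set ℕ}
    (hI : P.InstanceAux h π ν D) : π ≠ [] ∧ ν ≠ [] := by
  obtain ⟨e, π', ν', rfl, rfl⟩ := hI.shape
  simp

theorem InstanceAux.fpath_contract {h x y : L} {π ν : List (VEdge n L)} {D : Set ℕ}
    (hI : P.InstanceAux h π ν D) (hπ : P.FPath x π y) :
    P.FPath x ν y ∧ ∃ C : List (List (VEdge n L) × L),
      (∀ c ∈ C, P.FPath c.2 c.1 c.2) ∧
      contractUpd ν = contractUpd π + (C.map (fun c => contractUpd c.1)).sum := by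
  induction hI generalizing x with
  | single e => exact ⟨hπ, [], by simp, by simp⟩
  | cons e q rest ν' D hq hne hav hrest ih =>
    have hx : x = e.1 := hπ.start
    have hE : e ∈ P.E := hπ.head_mem_E
    have hrestp : P.FPath e.2.2 rest y := hπ.tail_
    obtain ⟨hν', C, hC, hctr⟩ := ih hrestp
    subst hx
    refine ⟨fpath_cons' hE (hq.append_ hν'), ⟨(q, e.2.2) :: C, ?_, ?_⟩⟩
    · intro c hc
      rcases List.mem_cons.1 hc with rfl | hc'
      · exact hq
      · exact hC c hc'
    · simp only [contract_cons, contract_append, List.map_cons, List.sum_cons] at hctr ⊢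
      rw [hctr]
      abel

theorem InstanceAux.src_ne' {h : L} {π ν : List (VEdge n L)} {D : Set ℕ}
    (hI : P.InstanceAux h π ν D) (hπ : ∀ f ∈ π, f.1 ≠ h) : ∀ f ∈ ν, f.1 ≠ h := by
  induction hI with
  | single e => exact hπ
  | cons e q rest ν' D hq hne hav hrest ih =>
    intro f hf
    rcases List.mem_cons.1 hf with rfl | hf'
    · exact hπ f (List.mem_cons_self)
    · rcases List.mem_append.1 hf' with hq' | hν'
      · rcases hq.src_cases f hq' with h' | ⟨g, hg, hg'⟩
        · rw [h']; exact hne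
        · rw [← hg']; exact hav g hg
      · exact ih (fun g hg => hπ g (List.mem_cons_of_mem _ hg)) f hν'

theorem InstanceAux.src_tail {h : L} {π ν : List (VEdge n L)} {D : Set ℕ}
    (hI : P.InstanceAux h π ν D) (hπt : ∀ f ∈ π.tail, f.1 ≠ h) :
    ∃ e ν', ν = e :: ν' ∧ π.head? = some e ∧ ∀ f ∈ ν', f.1 ≠ h := by
  cases hI with
  | single e => exact ⟨e, [], rfl, rfl, by simp⟩
  | cons e q rest ν' D hq hne hav hrest =>
    refine ⟨e, q ++ ν', rfl, rfl, ?_⟩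
    intro f hf
    rcases List.mem_append.1 hf with hq' | hν'
    · rcases hq.src_cases f hq' with h' | ⟨g, hg, hg'⟩
      · rw [h']; exact hne
      · rw [← hg']; exact hav g hg
    · exact hrest.src_ne' hπt f hν'

theorem dropLast_cons_append {α : Type*} {e : α} {q t : List α} (ht : t ≠ []) :
    (e :: (q ++ t)).dropLast = e :: (q ++ t.dropLast) := by
  obtain ⟨t0, lst, rfl⟩ : ∃ t0 lst, t = t0 ++ [lst] :=
    ⟨t.dropLast, t.getLast ht, (List.dropLast_append_getLast ht).symm⟩
  rw [show e :: (q ++ (t0 ++ [lst])) = (e :: (q ++ t0)) ++ [lst] by simp]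
  rw [List.dropLast_concat, List.dropLast_concat]

theorem InstanceAux.tgt_dropLast {h : L} {π ν : List (VEdge n L)} {D : Set ℕ}
    (hI : P.InstanceAux h π ν D) (hπ : ∀ f ∈ π.dropLast, f.2.2 ≠ h) :
    ∀ f ∈ ν.dropLast, f.2.2 ≠ h := by
  induction hI with
  | single e => simpa using hπ
  | cons e q rest ν' D hq hne hav hrest ih =>
    have hν'ne : ν' ≠ [] := hrest.ne_nil.2
    have hrestne : rest ≠ [] := hrest.ne_nil.1
    rw [dropLast_cons_append hν'ne]
    intro f hf
    rcases List.mem_cons.1 hf with rfl | hf'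
    · exact hne
    · rcases List.mem_append.1 hf' with hq' | hd'
      · exact hav f hq'
      · refine ih (fun g hg => hπ g ?_) f hd'
        have : (e :: rest).dropLast = e :: rest.dropLast := by
          have := dropLast_cons_append (e := e) (q := ([] : List (VEdge n L))) hrestne
          simpa using this
        rw [this]
        exact List.mem_cons_of_mem _ hg

theorem InstanceAux.getLast_eq {h : L} {π ν : List (VEdge n L)} {D : Set ℕ}
    (hI : P.InstanceAux h π ν D) : ν.getLast? = π.getLast? := by
  induction hI with
  | single e => rfl
  | cons e q rest ν' D hq hne hav hrest ih =>
    have hν'ne : ν' ≠ [] := hrest.ne_nil.2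
    have hrestne : rest ≠ [] := hrest.ne_nil.1
    rw [show (e :: (q ++ ν')) = (e :: q) ++ ν' by simp,
      List.getLast?_append_of_ne_nil _ hν'ne, ih,
      show (e :: rest) = [e] ++ rest by simp,
      List.getLast?_append_of_ne_nil _ hrestne]

/-- facts about loop paths -/
theorem LoopPath.head_src {l0 l : L} {π : List (VEdge n L)} (h : P.LoopPath l0 l π) :
    ∃ e rest, π = e :: rest ∧ e.1 = l := by
  obtain ⟨_, hpath, hne, _, _⟩ := h
  cases π with
  | nil => exact absurd rfl hne
  | cons e rest => exact ⟨e, rest, rfl, hpath.start.symm⟩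

theorem LoopPath.tail_src_ne {l0 l : L} {π : List (VEdge n L)} (h : P.LoopPath l0 l π) :
    ∀ f ∈ π.tail, f.1 ≠ l := by
  obtain ⟨e, rest, rfl, he⟩ := h.head_src
  obtain ⟨_, _, _, hnd, _⟩ := h
  simp only [List.map_cons, List.nodup_cons] at hnd
  intro f hf hfl
  simp only [List.tail_cons] at hf
  have hmem : f.1 ∈ rest.map Prod.fst := List.mem_map_of_mem hf
  rw [hfl, ← he] at hmem
  exact hnd.1 hmem

theorem mem_tail_of_mem_suffix {α : Type*} {g : α} {a rest' : List α} {f : α}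
    (hg : g ∈ rest') : g ∈ (a ++ f :: rest').tail := by
  cases a with
  | nil => simpa using hg
  | cons e a' => simp [hg]

theorem LoopPath.dropLast_tgt_ne {l0 l : L} {π : List (VEdge n L)} (h : P.LoopPath l0 l π) :
    ∀ f ∈ π.dropLast, f.2.2 ≠ l := by
  have hpath := h.2.1
  have hne := h.2.2.1
  intro f hf
  obtain ⟨π0, lst, hπeq0⟩ : ∃ π0 lst, π = π0 ++ [lst] :=
    ⟨π.dropLast, π.getLast hne, (List.dropLast_append_getLast hne).symm⟩
  have hdl : π.dropLast = π0 := by rw [hπeq0, List.dropLast_concat]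
  rw [hdl] at hf
  obtain ⟨a, b, hab⟩ := List.append_of_mem hf
  have hπeq : π = a ++ f :: (b ++ [lst]) := by
    rw [hπeq0, hab]; simp
  rw [hπeq] at hpath
  obtain ⟨z, g1, g2⟩ := hpath.split_
  have g3 : P.FPath f.2.2 (b ++ [lst]) l := g2.tail_
  cases hb : b with
  | nil =>
    rw [hb] at g3
    have hft : f.2.2 = lst.1 := g3.start
    rw [hft]
    refine h.tail_src_ne _ ?_
    rw [hπeq, hb]
    exact mem_tail_of_mem_suffix (by simp)
  | cons g0 b' =>
    rw [hb] at g3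
    have hft : f.2.2 = g0.1 := g3.start
    rw [hft]
    refine h.tail_src_ne _ ?_
    rw [hπeq, hb]
    exact mem_tail_of_mem_suffix (by simp)

theorem LoopPath.getLast_tgt {l0 l : L} {π : List (VEdge n L)} (h : P.LoopPath l0 l π)
    (hne : π ≠ []) : (π.getLast hne).2.2 = l := by
  obtain ⟨_, hpath, _, _, _⟩ := h
  exact hpath.end_ hne

/-- all the facts about an instance of a loop path that we need -/
theorem instance_facts {l0 l : L} {π ν : List (VEdge n L)} {D : Set ℕ}
    (hLP : P.LoopPath l0 l π) (hII : P.IsInstance π ν D) :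
    P.FPath l ν l ∧
    (∃ e ν', ν = e :: ν' ∧ e.1 = l ∧ ∀ f ∈ ν', f.1 ≠ l) ∧
    (∀ f ∈ ν.dropLast, f.2.2 ≠ l) ∧ (ν.getLast? = π.getLast?) ∧
    (∃ C : List (List (VEdge n L) × L), (∀ c ∈ C, P.FPath c.2 c.1 c.2) ∧
      contractUpd ν = contractUpd π + (C.map (fun c => contractUpd c.1)).sum) := by
  obtain ⟨e0, rest0, hπeq, hAux⟩ := hII
  obtain ⟨e1, rest1, hπeq1, he1⟩ := hLP.head_src
  have heq : e0 = e1 := by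
    rw [hπeq1] at hπeq
    exact ((List.cons.injEq .. ▸ hπeq).1).symm
  have hh : e0.1 = l := heq ▸ he1
  rw [hh] at hAux
  have hpath : P.FPath l π l := hLP.2.1
  obtain ⟨hν, C, hC, hctr⟩ := hAux.fpath_contract hpath
  refine ⟨hν, ?_, hAux.tgt_dropLast hLP.dropLast_tgt_ne, hAux.getLast_eq, C, hC, hctr⟩
  obtain ⟨e, ν', hνeq, hhead, hsrc⟩ := hAux.src_tail hLP.tail_src_ne
  refine ⟨e, ν', hνeq, ?_, hsrc⟩
  rw [hπeq] at hhead
  simp only [List.head?_cons, Option.some.injEq] at hhead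
  rw [← hhead]
  exact hh

end VASS


namespace VASS

variable {n : ℕ} {L : Type*} {P : VASS n L}

theorem seg_length {α : Type*} {p : List α} {a k : ℕ} (h : a + k ≤ p.length) :
    ((p.drop a).take k).length = k := by
  simp only [List.length_take, List.length_drop]
  omega

theorem seg_getElem {α : Type*} {p : List α} {a k m : ℕ} (h : a + k ≤ p.length)
    (hm : m < k) :
    ((p.drop a).take k)[m]'(by rw [seg_length h]; exact hm) = p[a+m]'(by omega) := by
  rw [List.getElem_take, List.getElem_drop]

theorem inst_last_tgt {l0 l : L} {πi ν : List (VEdge n L)} {D : Set ℕ}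
    (hLP : P.LoopPath l0 l πi) (hII : P.IsInstance πi ν D) (hνne : ν ≠ []) :
    (ν.getLast hνne).2.2 = l := by
  have hfacts := instance_facts hLP hII
  have hlast := hfacts.2.2.2.1
  have hπne : πi ≠ [] := hLP.2.2.1
  rw [List.getLast?_eq_getLast hνne, List.getLast?_eq_getLast hπne] at hlast
  have := Option.some.inj hlast
  rw [this]
  exact hLP.getLast_tgt hπne

theorem inst_unique {l0 l : L} {πi p : List (VEdge n L)} (hLP : P.LoopPath l0 l πi)
    {a k k' : ℕ} (h1 : P.InstanceAt πi p a k) (h2 : P.InstanceAt πi p a k') : k = k' := by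
  suffices H : ∀ k k', P.InstanceAt πi p a k → P.InstanceAt πi p a k' → k ≤ k' → k = k' by
    rcases le_total k k' with h | h
    · exact H k k' h1 h2 h
    · exact (H k' k h2 h1 h).symm
  clear h1 h2 k k'
  intro k k' h1 h2 hkk
  rcases Nat.eq_or_lt_of_le hkk with h | hlt
  · exact h
  exfalso
  obtain ⟨hlen1, hk1, D1, hII1⟩ := h1
  obtain ⟨hlen2, hk2, D2, hII2⟩ := h2
  have hνlen : ((p.drop a).take k).length = k := seg_length hlen1
  have hν'len : ((p.drop a).take k').length = k' := seg_length hlen2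
  have hνne : (p.drop a).take k ≠ [] := by
    intro hc; rw [hc] at hνlen; simp at hνlen; omega
  have hlast : (((p.drop a).take k).getLast hνne).2.2 = l := inst_last_tgt hLP hII1 hνne
  have hpre : ((p.drop a).take (k' - 1)).take k = (p.drop a).take k := by
    rw [List.take_take]
    congr 1
    omega
  have h2tk : ((p.drop a).take k').dropLast = (p.drop a).take (k' - 1) := by
    rw [List.dropLast_eq_take, hν'len, List.take_take]
    congr 1
    omega
  have hsub : ((p.drop a).take k).Sublist (((p.drop a).take k').dropLast) := by
    rw [h2tk, ← hpre]
    exact (List.take_prefix _ _).sublist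
  have hmem : ((p.drop a).take k).getLast hνne ∈ ((p.drop a).take k').dropLast :=
    hsub.mem (List.getLast_mem hνne)
  exact (instance_facts hLP hII2).2.2.1 _ hmem hlast

theorem inst_disjoint {l0 l : L} {πi p : List (VEdge n L)} (hLP : P.LoopPath l0 l πi)
    {a k a' k' : ℕ} (h1 : P.InstanceAt πi p a k) (h2 : P.InstanceAt πi p a' k')
    (hlt : a < a') (hlt2 : a' < a + k) : False := by
  obtain ⟨hlen1, hk1, D1, hII1⟩ := h1
  obtain ⟨hlen2, hk2, D2, hII2⟩ := h2
  obtain ⟨-, ⟨e1, ν1, hνeq1, he1, hsrc1⟩, -, -, -⟩ := instance_facts hLP hII1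
  obtain ⟨-, ⟨e2, ν2, hνeq2, he2, hsrc2⟩, -, -, -⟩ := instance_facts hLP hII2
  have hpa' : a' < p.length := by omega
  have h0 : ((p.drop a').take k')[0]'(by rw [seg_length hlen2]; omega)
      = p[a' + 0]'(by omega) := seg_getElem hlen2 (by omega)
  rw [List.getElem_of_eq hνeq2] at h0
  simp only [List.getElem_cons_zero] at h0
  have hfst : (p[a']'hpa').1 = l := by
    have hx : (p[a' + 0]'(by omega)).1 = l := by rw [← h0]; exact he2
    simpa using hx
  have hm : a' - a < k := by omega
  have hgm : ((p.drop a).take k)[a' - a]'(by rw [seg_length hlen1]; exact hm)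
      = p[a + (a' - a)]'(by omega) := seg_getElem hlen1 hm
  simp only [show a + (a' - a) = a' from by omega] at hgm
  rw [List.getElem_of_eq hνeq1] at hgm
  obtain ⟨m', hm'⟩ : ∃ m', a' - a = m' + 1 := ⟨a' - a - 1, by omega⟩
  simp only [hm'] at hgm
  simp only [List.getElem_cons_succ] at hgm
  have hmemν1 : (p[a']'hpa') ∈ ν1 := by
    have hmm := List.getElem_mem (show m' < ν1.length from by
      have := hgm
      exact (by
        have hlen3 : (e1 :: ν1).length = k := by rw [← hνeq1]; exact seg_length hlen1
        simp at hlen3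
        omega))
    rw [hgm] at hmm
    exact hmm
  exact hsrc1 _ hmemν1 (by rw [hfst])

end VASS


namespace VASS

variable {n : ℕ} {L : Type*} {P : VASS n L}

theorem take_drop_split {α : Type*} (p : List α) (a k : ℕ) :
    p.take a ++ ((p.drop a).take k ++ p.drop (a + k)) = p := by
  rw [show p.drop (a + k) = (p.drop a).drop k by rw [List.drop_drop]]
  rw [List.take_append_drop, List.take_append_drop]

theorem seg_preserved {α : Type*} {p : List α} {a k a' k' : ℕ} (h1 : a' + k' ≤ a)
    (h2 : a ≤ p.length) :
    ((p.take a ++ p.drop (a + k)).drop a').take k' = (p.drop a').take k' := by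
  have hl1 : (p.take a).length = a := by rw [List.length_take]; omega
  rw [List.drop_append, List.take_append, hl1,
    List.drop_take]
  have hlen2 : ((p.drop a').take (a - a')).length = a - a' := by
    simp only [List.length_take, List.length_drop]
    omega
  rw [hlen2, show k' - (a - a') = 0 by omega]
  simp only [List.take_zero, List.append_nil]
  rw [List.take_take]
  congr 1
  omega

theorem lps_to_indices {k : ℕ} {τ : Fin k → Upd n} {l0 : L}
    (hrange : Set.range τ = P.CFA l0) :
    ∀ (lps : List (List (VEdge n L))), (∀ lp ∈ lps, ∃ h, P.LoopPath l0 h lp) →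
    ∃ is : List (Fin k), (is.map τ).sum = (lps.map contractUpd).sum := by
  intro lps
  induction lps with
  | nil => exact fun _ => ⟨[], rfl⟩
  | cons lp lps ih =>
    intro hall
    obtain ⟨is, his⟩ := ih (fun lp' h' => hall lp' (List.mem_cons_of_mem _ h'))
    obtain ⟨h, hLP⟩ := hall lp (List.mem_cons_self)
    have hmem : contractUpd lp ∈ P.CFA l0 := ⟨h, lp, hLP, rfl⟩
    rw [← hrange] at hmem
    obtain ⟨j, hj⟩ := hmem
    exact ⟨j :: is, by simp [his, hj]⟩

theorem fillers_to_indices {k : ℕ} {τ : Fin k → Upd n} {l0 : L}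
    (hred : P.Reducible l0) (hrange : Set.range τ = P.CFA l0) :
    ∀ (C : List (List (VEdge n L) × L)), (∀ c ∈ C, P.FPath c.2 c.1 c.2) →
    ∃ is : List (Fin k), (is.map τ).sum = (C.map (fun c => contractUpd c.1)).sum := by
  intro C
  induction C with
  | nil => exact fun _ => ⟨[], rfl⟩
  | cons c C ih =>
    intro hall
    obtain ⟨is, his⟩ := ih (fun c' h' => hall c' (List.mem_cons_of_mem _ h'))
    obtain ⟨lps, hlps, hsum⟩ :=
      multiset_decomp hred c.1.length c.1 c.2 le_rfl (hall c (List.mem_cons_self))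
    obtain ⟨is2, his2⟩ := lps_to_indices hrange lps hlps
    refine ⟨is2 ++ is, ?_⟩
    simp only [List.map_append, List.sum_append, List.map_cons, List.sum_cons]
    rw [his, his2, hsum]

theorem count_lemma {l0 : L} (hred : P.Reducible l0) {k : ℕ} {τ : Fin k → Upd n}
    (hrange : Set.range τ = P.CFA l0) {i : Fin k} {l : L} {πi : List (VEdge n L)}
    (hLP : P.LoopPath l0 l πi) (hτi : τ i = contractUpd πi) :
    ∀ (N : ℕ) (p : List (VEdge n L)), p.length ≤ N → P.FPath l0 p l0 →
    ∀ (T : Finset (ℕ × ℕ)), (∀ q ∈ T, P.InstanceAt πi p q.1 q.2) →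
    ∃ is : List (Fin k), contractUpd p = (is.map τ).sum ∧ T.card ≤ is.count i := by
  intro N
  induction N with
  | zero =>
    intro p hlen hp T hT
    have hpnil : p = [] := List.eq_nil_of_length_eq_zero (Nat.le_zero.1 hlen)
    subst hpnil
    have hTe : T = ∅ := by
      rcases T.eq_empty_or_nonempty with h | ⟨q, hq⟩
      · exact h
      · obtain ⟨h1, h2, _⟩ := hT q hq
        simp at h1
        omega
    subst hTe
    exact ⟨[], by simp [contract_nil], by simp⟩
  | succ N ih =>
    intro p hlen hp T hT
    rcases T.eq_empty_or_nonempty with rfl | hTne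
    · obtain ⟨lps, hlps, hsum⟩ := multiset_decomp hred p.length p l0 le_rfl hp
      obtain ⟨is, his⟩ := lps_to_indices hrange lps hlps
      exact ⟨is, by rw [his, hsum], by simp⟩
    · obtain ⟨q0, hq0mem, hq0max⟩ := T.exists_max_image (fun q => q.1) hTne
      obtain ⟨a, k₀⟩ := q0
      have hinst := hT _ hq0mem
      obtain ⟨hlen0, hk0, D0, hII0⟩ := hinst
      obtain ⟨hνpath, ⟨e0, ν0', hνeq0, he0, -⟩, -, -, C, hC, hctr⟩ := instance_facts hLP hII0
      have hνlen : ((p.drop a).take k₀).length = k₀ := seg_length hlen0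
      have hνne : (p.drop a).take k₀ ≠ [] := by
        intro hc; rw [hc] at hνlen; simp at hνlen; omega
      -- decompose the path p
      have hsplit := take_drop_split p a k₀
      have hppieces : ∃ z, P.FPath l0 (p.take a) z ∧
          P.FPath z ((p.drop a).take k₀ ++ p.drop (a + k₀)) l0 := by
        rw [← hsplit] at hp
        exact hp.split_
      obtain ⟨z, hz1, hz2⟩ := hppieces
      obtain ⟨z2, hz3, hz4⟩ := hz2.split_
      -- z = l
      have hzl : z = l := by
        rw [hνeq0] at hz3
        rw [hz3.start, ← he0]
      -- z2 = l
      have hz2l : z2 = l := by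
        rw [← hz3.end_ hνne]
        exact inst_last_tgt hLP hII0 hνne
      subst hzl
      subst hz2l
      have hp' : P.FPath l0 (p.take a ++ p.drop (a + k₀)) l0 := hz1.append_ hz4
      have halen : a ≤ p.length := by omega
      have hlenp' : (p.take a ++ p.drop (a + k₀)).length = p.length - k₀ := by
        simp only [List.length_append, List.length_take, List.length_drop]
        omega
      have hlen' : (p.take a ++ p.drop (a + k₀)).length ≤ N := by omega
      have hT'inst : ∀ q ∈ T.erase (a, k₀),
          P.InstanceAt πi (p.take a ++ p.drop (a + k₀)) q.1 q.2 := by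
        intro q hq
        have hqT := Finset.mem_of_mem_erase hq
        have hqne := Finset.ne_of_mem_erase hq
        have hqi := hT q hqT
        have hqa : q.1 ≤ a := hq0max q hqT
        have hqlt : q.1 < a := by
          rcases Nat.eq_or_lt_of_le hqa with h | h
          · exfalso
            apply hqne
            have hq2 : q.2 = k₀ := inst_unique hLP (h ▸ hqi) ⟨hlen0, hk0, D0, hII0⟩
            exact Prod.ext h hq2
          · exact h
        have hqdisj : q.1 + q.2 ≤ a := by
          by_contra hcon
          exact inst_disjoint hLP hqi ⟨hlen0, hk0, D0, hII0⟩ hqlt (by omega)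
        obtain ⟨hq1, hq2, Dq, hIIq⟩ := hqi
        refine ⟨by omega, hq2, Dq, ?_⟩
        rw [seg_preserved hqdisj halen]
        exact hIIq
      obtain ⟨is1, hsum1, hcount1⟩ := ih _ hlen' hp' (T.erase (a, k₀)) hT'inst
      obtain ⟨is2, hsum2⟩ := fillers_to_indices hred hrange C hC
      refine ⟨i :: (is1 ++ is2), ?_, ?_⟩
      · have hcp : contractUpd p = contractUpd (p.take a ++ p.drop (a + k₀))
            + contractUpd ((p.drop a).take k₀) := by
          conv_lhs => rw [← hsplit]
          simp only [contract_append]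
          abel
        rw [hcp, hctr, hsum1, ← hτi, ← hsum2]
        simp only [List.map_cons, List.sum_cons, List.map_append, List.sum_append]
        abel
      · have hTcard : (T.erase (a, k₀)).card = T.card - 1 :=
          Finset.card_erase_of_mem hq0mem
        have hT1 : 1 ≤ T.card := Finset.card_pos.2 hTne
        rw [hTcard] at hcount1
        rw [List.count_cons_self, List.count_append]
        omega

end VASS


namespace VASS

variable {n : ℕ} {L : Type*} {P : VASS n L}

theorem trace_sum {p : List (VEdge n L)} {vals : ℕ → Valu n}
    (htr : P.FinTraceVals p vals) (j : Fin n) :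
    (vals p.length j : ℤ) ≤ (vals 0 j : ℤ) + contractUpd p j := by
  suffices H : ∀ m, m ≤ p.length →
      (vals m j : ℤ) ≤ (vals 0 j : ℤ) + contractUpd (p.take m) j by
    have := H p.length le_rfl
    rwa [List.take_length] at this
  intro m
  induction m with
  | zero => intro _; simp [contract_nil]
  | succ m ih =>
    intro hm
    have hm' : m < p.length := hm
    have step := htr m hm' j
    have hih := ih (le_of_lt hm')
    have htake : p.take (m+1) = p.take m ++ [p.get ⟨m, hm'⟩] := by
      rw [List.get_eq_getElem, ← List.take_concat_get hm']
      simp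
    have hc : contractUpd (p.take (m+1)) j
        = contractUpd (p.take m) j + (p.get ⟨m, hm'⟩).2.1 j := by
      rw [htake]
      have h2 := congrFun (contract_append (p.take m) [p.get ⟨m, hm'⟩]) j
      rw [h2]
      simp [contract_cons, contract_nil]
    rw [hc]
    linarith

theorem list_count_sum {k : ℕ} (τ : Fin k → Upd n) (is : List (Fin k)) (v : Fin n) :
    ((is.map τ).sum) v = ∑ j : Fin k, (is.count j : ℤ) * τ j v := by
  induction is with
  | nil => simp
  | cons a is ih =>
    have hl : ((List.map τ (a :: is)).sum) v = τ a v + ((is.map τ).sum) v := by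
      simp
    rw [hl, ih]
    have hr : ∀ j : Fin k, (((a :: is).count j : ℕ) : ℤ) * τ j v
        = (is.count j : ℤ) * τ j v + (if j = a then τ j v else 0) := by
      intro j
      by_cases h : j = a
      · subst h
        rw [List.count_cons_self, if_pos rfl]
        push_cast
        ring
      · rw [List.count_cons_of_ne (Ne.symm h), if_neg h]
        ring
    rw [Finset.sum_congr rfl (fun j _ => hr j), Finset.sum_add_distrib,
      Finset.sum_ite_eq' Finset.univ a (fun j => τ j v)]
    simp [add_comm]

end VASS

theorem rank_bound_key {n k : ℕ} (τ : Fin k → Upd n) (y : Fin k → Fin n) (σ0 : Valu n)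
    (hneg : ∀ i, τ i (y i) < 0) (hle : ∀ i j : Fin k, i ≤ j → τ j (y i) ≤ 0)
    (c : Fin k → ℕ)
    (hc : ∀ i : Fin k, -(σ0 (y i) : ℤ) ≤ ∑ j : Fin k, (c j : ℤ) * τ j (y i)) :
    ∀ i : Fin k, (c i : ℚ) ≤ RankBound τ y σ0 i := by
  suffices H : ∀ (N : ℕ) (i : Fin k), i.1 < N → (c i : ℚ) ≤ RankBound τ y σ0 i by
    intro i; exact H (i.1 + 1) i (Nat.lt_succ_self _)
  intro N
  induction N with
  | zero => intro i hi; exact absurd hi (Nat.not_lt_zero _)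
  | succ N ih =>
    intro i hi
    have hsplit := Finset.sum_filter_add_sum_filter_not Finset.univ
      (fun j : Fin k => j < i ∧ 0 < τ j (y i)) (fun j => (c j : ℤ) * τ j (y i))
    have hother : ∑ j ∈ Finset.univ.filter (fun j : Fin k => ¬(j < i ∧ 0 < τ j (y i))),
        (c j : ℤ) * τ j (y i) ≤ (c i : ℤ) * τ i (y i) := by
      have hile : ∀ j ∈ Finset.univ.filter (fun j : Fin k => ¬(j < i ∧ 0 < τ j (y i))),
          (c j : ℤ) * τ j (y i) ≤ if j = i then (c i : ℤ) * τ i (y i) else 0 := by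
        intro j hj
        simp only [Finset.mem_filter, Finset.mem_univ, true_and] at hj
        by_cases hji : j = i
        · subst hji; simp
        · rw [if_neg hji]
          apply mul_nonpos_of_nonneg_of_nonpos (by positivity)
          rcases lt_or_ge j i with hlt | hge
          · exact le_of_not_gt fun hpos => hj ⟨hlt, hpos⟩
          · exact hle i j hge
      calc ∑ j ∈ Finset.univ.filter (fun j : Fin k => ¬(j < i ∧ 0 < τ j (y i))),
            (c j : ℤ) * τ j (y i)
          ≤ ∑ j ∈ Finset.univ.filter (fun j : Fin k => ¬(j < i ∧ 0 < τ j (y i))),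
            (if j = i then (c i : ℤ) * τ i (y i) else 0) := Finset.sum_le_sum hile
        _ = if i ∈ Finset.univ.filter (fun j : Fin k => ¬(j < i ∧ 0 < τ j (y i)))
            then (c i : ℤ) * τ i (y i) else 0 :=
            Finset.sum_ite_eq' _ i (fun _ => (c i : ℤ) * τ i (y i))
        _ = (c i : ℤ) * τ i (y i) := by
            rw [if_pos]
            simp only [Finset.mem_filter, Finset.mem_univ, true_and]
            intro hcon
            exact absurd hcon.1 (lt_irrefl i)
    have hZ : (c i : ℤ) * (-(τ i (y i)))
        ≤ (σ0 (y i) : ℤ) + ∑ j ∈ Finset.univ.filter (fun j : Fin k => j < i ∧ 0 < τ j (y i)),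
          (c j : ℤ) * τ j (y i) := by
      have h1 := hc i
      rw [← hsplit] at h1
      rw [mul_neg]
      linarith
    have hQ : (c i : ℚ) * ((-(τ i (y i)) : ℤ) : ℚ) ≤ (σ0 (y i) : ℚ)
        + ∑ j ∈ Finset.univ.filter (fun j : Fin k => j < i ∧ 0 < τ j (y i)),
          (c j : ℚ) * ((τ j (y i) : ℤ) : ℚ) := by
      exact_mod_cast hZ
    have hKpos : (0 : ℚ) < ((-(τ i (y i)) : ℤ) : ℚ) := by
      have h := hneg i
      have : (0 : ℤ) < -(τ i (y i)) := by omega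
      exact_mod_cast this
    rw [RankBound, le_div_iff₀ hKpos]
    rw [Finset.sum_attach (Finset.univ.filter (fun j : Fin k => j < i ∧ 0 < τ j (y i)))
      (fun j => RankBound τ y σ0 j * ((τ j (y i) : ℤ) : ℚ))]
    refine le_trans hQ ?_
    have hterm : ∀ j ∈ Finset.univ.filter (fun j : Fin k => j < i ∧ 0 < τ j (y i)),
        (c j : ℚ) * ((τ j (y i) : ℤ) : ℚ)
          ≤ RankBound τ y σ0 j * ((τ j (y i) : ℤ) : ℚ) := by
      intro j hj
      simp only [Finset.mem_filter, Finset.mem_univ, true_and] at hj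
      have hjN : j.1 < N := by
        have h2 : j.1 < i.1 := hj.1
        omega
      have hτpos : (0:ℚ) ≤ ((τ j (y i) : ℤ) : ℚ) := by
        have h3 := le_of_lt hj.2
        exact_mod_cast h3
      exact mul_le_mul_of_nonneg_right (ih j hjN) hτpos
    exact (add_le_add_iff_left _).2 (Finset.sum_le_sum hterm)


/-- Let `P` be a reducible lossy VASS whose control flow graph is a single
SCC with unique entry (and exit) location `l0`, let `τ₁,…,τ_k` enumerate `CFA P` (with `τ i`
the contracted update of the loop-path `π i`) and satisfy the ranking condition together with
the variables `y₁,…,y_k`.  Then for every finite trace of `P` from `(l0, σ0)` back to `l0`,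
the underlying path contains at most `Bound(τᵢ)` instances of `π i`; i.e. `Bound(τᵢ)` is a
path-bound for `π i`. -/
theorem bound_is_path_bound
    {n : ℕ} {L : Type*} [Finite L] (P : VASS n L) (l0 : L)
    (hEfin : P.E.Finite)
    (hreach : ∀ x, ∃ p, P.FPath l0 p x)
    (hcoreach : ∀ x, ∃ p, P.FPath x p l0)
    (hred : P.Reducible l0)
    {k : ℕ} (τ : Fin k → Upd n) (y : Fin k → Fin n)
    (π : Fin k → List (VEdge n L))
    (hπ : ∀ i, ∃ l, P.LoopPath l0 l (π i))
    (hτπ : ∀ i, τ i = VASS.contractUpd (π i))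
    (hrank : RankingCondition (P.CFA l0) τ y)
    (σ0 : Valu n) (vals : ℕ → Valu n) (hv0 : vals 0 = σ0)
    (p : List (VEdge n L)) (hp : P.FPath l0 p l0)
    (htr : P.FinTraceVals p vals)
    (i : Fin k) :
    (P.numInstances (π i) p : ℚ) ≤ RankBound τ y σ0 i := by
  classical
  obtain ⟨l, hLP⟩ := hπ i
  obtain ⟨hinj, hrange, hneg, hle⟩ := hrank
  -- the set of instances is finite
  have hfin : {q : ℕ × ℕ | P.InstanceAt (π i) p q.1 q.2}.Finite := by
    apply Set.Finite.subset (Set.finite_Icc ((0, 0) : ℕ × ℕ) (p.length, p.length))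
    rintro ⟨a, k0⟩ ⟨h1, h2, -⟩
    simp only [Set.mem_Icc, Prod.mk_le_mk]
    exact ⟨⟨Nat.zero_le _, Nat.zero_le _⟩, by omega, by omega⟩
  have hT : ∀ q ∈ hfin.toFinset, P.InstanceAt (π i) p q.1 q.2 := by
    intro q hq
    rw [Set.Finite.mem_toFinset] at hq
    exact hq
  obtain ⟨is, hsum, hcount⟩ := VASS.count_lemma hred hrange hLP (hτπ i)
    p.length p le_rfl hp hfin.toFinset hT
  -- trace bound on total update
  have hcontr : ∀ v : Fin n, -(σ0 v : ℤ) ≤ VASS.contractUpd p v := by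
    intro v
    have h1 := VASS.trace_sum htr v
    rw [hv0] at h1
    have h2 : (0 : ℤ) ≤ (vals p.length v : ℤ) := Int.natCast_nonneg _
    linarith
  have hc : ∀ i' : Fin k, -(σ0 (y i') : ℤ)
      ≤ ∑ j : Fin k, (is.count j : ℤ) * τ j (y i') := by
    intro i'
    have h1 := hcontr (y i')
    have h2 := congrFun hsum (y i')
    rw [h2, VASS.list_count_sum τ is (y i')] at h1
    exact h1
  have hkey := rank_bound_key τ y σ0 hneg hle (fun j => is.count j) hc i
  have hnum : P.numInstances (π i) p = hfin.toFinset.card := by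
    rw [VASS.numInstances, Set.ncard_eq_toFinset_card _ hfin]
  rw [hnum]
  calc (hfin.toFinset.card : ℚ) ≤ (is.count i : ℚ) := by exact_mod_cast hcount
    _ ≤ RankBound τ y σ0 i := hkey
end

section
/- Let P be a reducible VASS (with finitely many locations) and let p be an infinite path of P starting at the entry location. Then there exists a loop-path π of P such that p contains infinitely many instances of π. -/
open scoped BigOperators

namespace VASS

variable {n : ℕ} {L : Type*}

lemma fpath_append {P : VASS n L} {a b c : L} {p q : List (VEdge n L)}
    (hp : P.FPath a p b) (hq : P.FPath b q c) : P.FPath a (p ++ q) c := by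
  induction hp with
  | nil => simpa using hq
  | cons he _ ih => exact FPath.cons he (ih hq)

lemma fpath_nil_eq {P : VASS n L} {a b : L} (h : P.FPath a [] b) : a = b := by
  cases h; rfl

lemma fpath_cons {P : VASS n L} {a c : L} {e : VEdge n L} {p : List (VEdge n L)}
    (h : P.FPath a (e :: p) c) : e.1 = a ∧ e ∈ P.E ∧ P.FPath e.2.2 p c := by
  cases h with
  | cons he hp => exact ⟨rfl, he, hp⟩

lemma fpath_split {P : VASS n L} {a c : L} :
    ∀ {p q : List (VEdge n L)}, P.FPath a (p ++ q) c → ∃ b, P.FPath a p b ∧ P.FPath b q c := by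
  intro p
  induction p generalizing a with
  | nil => exact fun h => ⟨a, FPath.nil a, h⟩
  | cons e p ih =>
    intro q h
    obtain ⟨h1, h2, h3⟩ := fpath_cons h
    obtain ⟨b, hb1, hb2⟩ := ih h3
    subst h1
    exact ⟨b, FPath.cons h2 hb1, hb2⟩

lemma fpath_mem_E {P : VASS n L} {a b : L} {p : List (VEdge n L)}
    (h : P.FPath a p b) : ∀ e ∈ p, e ∈ P.E := by
  induction h with
  | nil => simp
  | cons he _ ih =>
    intro e hm
    rcases List.mem_cons.1 hm with h' | h'
    · subst h'; exact he
    · exact ih e h'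

lemma fpath_targets_ne {P : VASS n L} {a c h : L} {p : List (VEdge n L)}
    (hp : P.FPath a p c) (hsrc : ∀ e ∈ p, e.1 ≠ h) (hc : c ≠ h) :
    ∀ e ∈ p, e.2.2 ≠ h := by
  induction hp with
  | nil => simp
  | @cons a b c d p hmem hp ih =>
    intro e he
    rcases List.mem_cons.1 he with h' | h'
    · subst h'
      cases p with
      | nil => simpa [fpath_nil_eq hp] using hc
      | cons e' p' =>
        have := (fpath_cons hp).1
        simp only []
        rw [← this]
        exact hsrc e' (by simp)
    · exact ih (fun e' he' => hsrc e' (List.mem_cons_of_mem _ he')) hc e h'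

end VASS

namespace VASS

/-- The finite segment of the infinite path starting at `i` with `k` edges. -/
def pathSeg (locs : ℕ → L) (upds : ℕ → Upd n) (i k : ℕ) : List (VEdge n L) :=
  (List.range k).map (fun m => (locs (i+m), upds (i+m), locs (i+m+1)))

lemma pathSeg_succ (locs : ℕ → L) (upds : ℕ → Upd n) (i k : ℕ) :
    pathSeg locs upds i (k+1)
      = (locs i, upds i, locs (i+1)) :: pathSeg locs upds (i+1) k := by
  unfold pathSeg
  rw [List.range_succ_eq_map, List.map_cons, List.map_map]
  refine congrArg₂ _ (by simp) (List.map_congr_left ?_)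
  intro m _
  have h1 : i + (m + 1) = i + 1 + m := by omega
  have h2 : i + (m + 1) + 1 = i + 1 + m + 1 := by omega
  simp [Function.comp, h1, h2]

lemma mem_pathSeg {locs : ℕ → L} {upds : ℕ → Upd n} {i k : ℕ} {e : VEdge n L} :
    e ∈ pathSeg locs upds i k ↔
      ∃ m, m < k ∧ e = (locs (i+m), upds (i+m), locs (i+m+1)) := by
  simp [pathSeg, eq_comm]

lemma length_pathSeg (locs : ℕ → L) (upds : ℕ → Upd n) (i k : ℕ) :
    (pathSeg locs upds i k).length = k := by simp [pathSeg]

lemma fpath_pathSeg {P : VASS n L} {locs : ℕ → L} {upds : ℕ → Upd n}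
    (hpath : ∀ i, (locs i, upds i, locs (i+1)) ∈ P.E) :
    ∀ k i, P.FPath (locs i) (pathSeg locs upds i k) (locs (i+k)) := by
  intro k
  induction k with
  | zero => intro i; simpa [pathSeg] using FPath.nil (locs i)
  | succ k ih =>
    intro i
    rw [pathSeg_succ]
    have : i + (k + 1) = (i + 1) + k := by omega
    rw [this]
    exact FPath.cons (hpath i) (ih (i+1))

lemma pigeon {β : Type*} {S : Set ℕ} (hS : S.Infinite) (f : ℕ → β) {F : Set β}
    (hF : F.Finite) (hf : ∀ t ∈ S, f t ∈ F) : ∃ b, {t | t ∈ S ∧ f t = b}.Infinite := by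
  by_contra hc
  push_neg at hc
  have hsub : S ⊆ ⋃ b ∈ F, {t | t ∈ S ∧ f t = b} := fun t ht =>
    Set.mem_biUnion (hf t ht) ⟨ht, rfl⟩
  exact hS ((hF.biUnion (fun b _ => hc b)).subset hsub)

lemma nodup_length_le {β : Type*} {l : List β} {F : Set β} (hF : F.Finite)
    (hnd : l.Nodup) (hmem : ∀ x ∈ l, x ∈ F) : l.length ≤ F.ncard := by
  classical
  have h1 : l.toFinset.card = l.length := List.toFinset_card_of_nodup hnd
  have h2 : l.toFinset ⊆ hF.toFinset := by
    intro x hx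
    simp only [Set.Finite.mem_toFinset]
    exact hmem x (List.mem_toFinset.1 hx)
  have h3 := Finset.card_le_card h2
  rw [h1] at h3
  rwa [Set.ncard_eq_toFinset_card F hF]

lemma finite_candidates (P : VASS n L) (hEfin : P.E.Finite) (N : ℕ) :
    {l : List (VEdge n L) | (∀ e ∈ l, e ∈ P.E) ∧ l.length ≤ N}.Finite := by
  haveI : Finite P.E := hEfin
  have h1 : {l : List P.E | l.length ≤ N}.Finite := List.finite_length_le _ N
  refine (h1.image (List.map (Subtype.val : P.E → VEdge n L))).subset ?_
  rintro l ⟨hmem, hlen⟩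
  refine ⟨l.attach.map (fun e => ⟨e.1, hmem e.1 e.2⟩), by simpa using hlen, ?_⟩
  rw [List.map_map]
  have : (Subtype.val ∘ fun e : {x // x ∈ l} => (⟨e.1, hmem e.1 e.2⟩ : P.E)) = fun e => e.1 := rfl
  rw [this]
  exact List.attach_map_subtype_val l

end VASS

namespace VASS

/-- Extraction of a simple loop-path from a cyclic path returning to `hh`
whose interior avoids `hh`, together with the instance structure. -/
lemma extract (P : VASS n L) (hh : L) :
    ∀ N (s : List (VEdge n L)), s.length ≤ N → ∀ a, P.FPath a s hh → s ≠ [] →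
      (∀ e ∈ s.tail, e.1 ≠ hh) → (∀ e ∈ s.tail, e.1 ≠ a) →
      ∃ π D, P.InstanceAux hh π s D ∧ P.FPath a π hh ∧ π ≠ [] ∧
        (π.map Prod.fst).Nodup ∧ ∀ e ∈ π, e ∈ s := by
  classical
  intro N
  induction N with
  | zero =>
    intro s hlen a _ hne _ _
    cases s with
    | nil => exact absurd rfl hne
    | cons e t => simp at hlen
  | succ N ih =>
    intro s hlen a hpath hne hth hta
    obtain ⟨e, rest, rfl⟩ : ∃ e rest, s = e :: rest := by
      cases s with
      | nil => exact absurd rfl hne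
      | cons e t => exact ⟨_, _, rfl⟩
    obtain ⟨ea, ed, eb⟩ := e
    obtain ⟨he1, heE, hrest⟩ := fpath_cons hpath
    simp only at he1
    subst he1
    cases rest with
    | nil =>
      have hbh : eb = hh := fpath_nil_eq hrest
      subst hbh
      refine ⟨[(ea, ed, eb)], {0}, InstanceAux.single _, ?_, by simp, by simp, by simp⟩
      exact FPath.cons heE (FPath.nil _)
    | cons e' rtail =>
      have hb' : e'.1 = eb := (fpath_cons hrest).1
      have hbh : eb ≠ hh := by
        rw [← hb']
        exact hth e' (by simp)
      set rest := e' :: rtail with hrestdef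
      -- find the last index of `rest` whose source is `eb`
      set Pj : ℕ → Prop := fun j => ∃ hj : j < rest.length, (rest.get ⟨j, hj⟩).1 = eb with hPjdef
      set j : ℕ := Nat.findGreatest Pj (rest.length - 1) with hjdef
      have hP0 : Pj 0 := ⟨by simp [hrestdef], hb'⟩
      have hPj : Pj j := Nat.findGreatest_spec (Nat.zero_le _) hP0
      obtain ⟨hjlt, hjsrc⟩ := hPj
      have hjmax : ∀ r (hr : r < rest.length), j < r → (rest.get ⟨r, hr⟩).1 ≠ eb := by
        intro r hr hjr
        have hnP : ¬ Pj r := Nat.findGreatest_is_greatest hjr (by omega)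
        intro hcon
        exact hnP ⟨hr, hcon⟩
      have hqr : rest.take j ++ rest.drop j = rest := List.take_append_drop j rest
      have hpath2 : P.FPath eb (rest.take j ++ rest.drop j) hh := by rwa [hqr]
      obtain ⟨c, hq, hrest'⟩ := fpath_split hpath2
      have hdropeq : rest.drop j = rest.get ⟨j, hjlt⟩ :: rest.drop (j + 1) := by
        rw [List.drop_eq_getElem_cons hjlt]
        rfl
      have hc : c = eb := by
        rw [hdropeq] at hrest'
        rw [← (fpath_cons hrest').1, hjsrc]
      subst hc
      -- facts about the tail of the dropped part
      have hdroptail : (rest.drop j).tail = rest.drop (j + 1) := by rw [hdropeq]; rfl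
      have hmemdrop : ∀ e2 ∈ rest.drop (j + 1), ∃ r, ∃ hr : r < rest.length,
          j < r ∧ e2 = rest.get ⟨r, hr⟩ := by
        intro e2 he2
        obtain ⟨i, hi, hie⟩ := List.mem_iff_getElem.1 he2
        refine ⟨j + 1 + i, by simp at hi; omega, by omega, ?_⟩
        rw [← hie, List.getElem_drop]
        rfl
      have htailrest : ∀ e2 ∈ rest.drop (j + 1), e2 ∈ rest := fun e2 he2 =>
        List.drop_subset _ _ he2
      -- recursive call on the dropped part
      have hlen' : (rest.drop j).length ≤ N := by
        simp only [List.length_drop]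
        simp only [List.length_cons] at hlen
        omega
      have hdropne : rest.drop j ≠ [] := by
        rw [hdropeq]
        exact List.cons_ne_nil _ _
      have hth' : ∀ e2 ∈ (rest.drop j).tail, e2.1 ≠ hh := by
        rw [hdroptail]
        intro e2 he2
        exact hth e2 (htailrest e2 he2)
      have hta' : ∀ e2 ∈ (rest.drop j).tail, e2.1 ≠ c := by
        rw [hdroptail]
        intro e2 he2
        obtain ⟨r, hr, hjr, rfl⟩ := hmemdrop e2 he2
        exact hjmax r hr hjr
      obtain ⟨π', D', hIA, hfp', hne', hnd', hsub'⟩ :=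
        ih (rest.drop j) hlen' c hrest' hdropne hth' hta'
      -- the filler `q = rest.take j`
      have hqmem : ∀ e2 ∈ rest.take j, e2 ∈ rest := fun e2 he2 => List.take_subset _ _ he2
      have htq : ∀ e2 ∈ rest.take j, e2.2.2 ≠ hh :=
        fpath_targets_ne hq (fun e2 he2 => hth e2 (hqmem e2 he2)) hbh
      have hIA2 := InstanceAux.cons (P := P) (h := hh) (ea, ed, c) (rest.take j) π'
        (rest.drop j) D' hq hbh htq hIA
      rw [hqr] at hIA2
      refine ⟨(ea, ed, c) :: π', _, hIA2, FPath.cons heE hfp', by simp, ?_, ?_⟩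
      · simp only [List.map_cons, List.nodup_cons]
        refine ⟨?_, hnd'⟩
        intro hmem
        obtain ⟨e2, he2, he2a⟩ := List.mem_map.1 hmem
        exact hta e2 (List.drop_subset _ _ (hsub' e2 he2)) he2a
      · intro e2 he2
        rcases List.mem_cons.1 he2 with h' | h'
        · simp [h']
        · exact List.mem_cons_of_mem _ (List.drop_subset _ _ (hsub' e2 h'))

end VASS

/-- Every infinite path of a reducible VASS (with finitely many locations)
starting at the entry location contains infinitely many instances of some loop-path. -/
theorem infinite_path_has_infinitely_many_instances
    {n : ℕ} {L : Type*} [Finite L] (P : VASS n L) (entry : L)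
    (hEfin : P.E.Finite)
    (hreach : P.EntryReach entry)
    (hred : P.Reducible entry)
    (locs : ℕ → L) (upds : ℕ → Upd n)
    (hpath : ∀ i, (locs i, upds i, locs (i+1)) ∈ P.E)
    (h0 : locs 0 = entry) :
    ∃ (l : L) (π : List (VEdge n L)), P.LoopPath entry l π ∧
      {i : ℕ | ∃ k, 1 ≤ k ∧ ∃ D, P.IsInstance π
        ((List.range k).map (fun m => (locs (i+m), upds (i+m), locs (i+m+1)))) D}.Infinite := by
  classical
  set f : ℕ → VEdge n L := fun t => (locs t, upds t, locs (t+1)) with hf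
  have hfseg : ∀ i k, VASS.pathSeg locs upds i k = (List.range k).map (fun m => f (i + m)) := by
    intro i k; rfl
  have hfpseg : ∀ k i, P.FPath (locs i) (VASS.pathSeg locs upds i k) (locs (i + k)) :=
    VASS.fpath_pathSeg hpath
  -- Step 1: there are infinitely many times at which a back edge is taken
  have hB : {t : ℕ | P.BackEdge entry (f t)}.Infinite := by
    apply Set.infinite_of_forall_exists_gt
    intro t0
    obtain ⟨m, m', hne, heq⟩ :=
      Finite.exists_ne_map_eq_of_infinite (fun m : ℕ => locs (t0 + 1 + m))
    -- get u < v with equal locations, u > t0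
    obtain ⟨u, v, huv, hut0, hloc⟩ : ∃ u v, u < v ∧ t0 < u ∧ locs u = locs v := by
      rcases Nat.lt_or_ge m m' with hlt | hge
      · exact ⟨t0 + 1 + m, t0 + 1 + m', by omega, by omega, heq⟩
      · have : m' < m := by omega
        exact ⟨t0 + 1 + m', t0 + 1 + m, by omega, by omega, heq.symm⟩
    have hcyc : P.FPath (locs u) (VASS.pathSeg locs upds u (v - u)) (locs u) := by
      have := hfpseg (v - u) u
      rwa [show u + (v - u) = v by omega, ← hloc] at this
    by_contra hcon
    push_neg at hcon
    have hnb : ∀ e ∈ VASS.pathSeg locs upds u (v - u), ¬ P.BackEdge entry e := by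
      intro e he
      rw [hfseg] at he
      obtain ⟨m2, hm2, rfl⟩ := by simpa [eq_comm] using he
      intro hbe
      have := hcon (u + m2) hbe
      omega
    have := hred (locs u) _ hnb hcyc
    have hl := congrArg List.length this
    rw [VASS.length_pathSeg] at hl
    simp at hl
    omega
  -- Step 2: some back edge is taken infinitely often
  obtain ⟨estar, hT⟩ := VASS.pigeon hB f hEfin (fun t _ => hpath t)
  set T : Set ℕ := {t | t ∈ {t : ℕ | P.BackEdge entry (f t)} ∧ f t = estar} with hTdef
  set h : L := estar.2.2 with hhdef
  obtain ⟨t1, ht1⟩ := hT.nonempty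
  have hBE : P.BackEdge entry estar := ht1.2 ▸ ht1.1
  have hDom : P.Dominates entry h estar.1 := hBE.2
  have hTfacts : ∀ t ∈ T, locs t = estar.1 ∧ locs (t + 1) = h := by
    intro t ht
    exact ⟨congrArg Prod.fst ht.2, congrArg (fun e => e.2.2) ht.2⟩
  -- Step 3: the last visit to `h` before each back-edge time
  set st : ℕ → ℕ := fun t => Nat.findGreatest (fun s => locs s = h) t with hstdef
  have hstfacts : ∀ t ∈ T, locs (st t) = h ∧ st t ≤ t ∧
      ∀ r, st t < r → r ≤ t → locs r ≠ h := by
    intro t ht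
    have hex : ∃ s, s ≤ t ∧ locs s = h := by
      by_cases hch : h = entry
      · exact ⟨0, Nat.zero_le t, by rw [h0, hch]⟩
      · have hp : P.FPath entry (VASS.pathSeg locs upds 0 t) estar.1 := by
          have := hfpseg t 0
          rwa [h0, show 0 + t = t by omega, (hTfacts t ht).1] at this
        rcases hDom _ hp with hv | ⟨e, he, heh⟩
        · exact absurd hv hch
        · rw [hfseg] at he
          obtain ⟨m2, hm2, rfl⟩ := by simpa [eq_comm] using he
          exact ⟨m2 + 1, by omega, by simpa using heh⟩
    obtain ⟨s0, hs0t, hs0⟩ := hex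
    refine ⟨Nat.findGreatest_spec (P := fun s => locs s = h) hs0t hs0, Nat.findGreatest_le t, ?_⟩
    intro r hr1 hr2
    exact Nat.findGreatest_is_greatest hr1 hr2
  -- Step 4: extract a loop-path and instance from each return segment
  set σ : ℕ → List (VEdge n L) := fun t => VASS.pathSeg locs upds (st t) (t + 1 - st t)
    with hσdef
  set Q : ℕ → List (VEdge n L) → Prop := fun t π => ∃ D, P.InstanceAux h π (σ t) D ∧
    P.FPath h π h ∧ π ≠ [] ∧ (π.map Prod.fst).Nodup ∧ ∀ e ∈ π, e ∈ σ t with hQdef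
  have hext : ∀ t ∈ T, ∃ π, Q t π := by
    intro t ht
    obtain ⟨hsth, hstle, hstmax⟩ := hstfacts t ht
    have htail : ∀ e ∈ (σ t).tail, e.1 ≠ h := by
      have hk : t + 1 - st t = (t - st t) + 1 := by omega
      have htl : (σ t).tail = VASS.pathSeg locs upds (st t + 1) (t - st t) := by
        rw [hσdef]
        simp only [hk, VASS.pathSeg_succ, List.tail_cons]
      rw [htl, hfseg]
      intro e he
      obtain ⟨m2, hm2, rfl⟩ := by simpa [eq_comm] using he
      exact hstmax (st t + 1 + m2) (by omega) (by omega)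
    have hfp : P.FPath h (σ t) h := by
      have := hfpseg (t + 1 - st t) (st t)
      rwa [hsth, show st t + (t + 1 - st t) = t + 1 by omega, (hTfacts t ht).2] at this
    have hne : σ t ≠ [] := by
      intro hcon
      have := congrArg List.length hcon
      rw [hσdef] at this
      simp [VASS.length_pathSeg] at this
      omega
    obtain ⟨π, D, h1, h2, h3, h4, h5⟩ :=
      VASS.extract P h (σ t).length (σ t) le_rfl h hfp hne htail htail
    exact ⟨π, D, h1, h2, h3, h4, h5⟩
  set g : ℕ → List (VEdge n L) := fun t => if hq : ∃ π, Q t π then hq.choose else []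
    with hgdef
  have hgQ : ∀ t ∈ T, Q t (g t) := by
    intro t ht
    have hq : ∃ π, Q t π := hext t ht
    simp only [hgdef, dif_pos hq]
    exact hq.choose_spec
  -- Step 5: pigeonhole over the finitely many candidate loop-paths
  have hgF : ∀ t ∈ T, g t ∈ {l : List (VEdge n L) | (∀ e ∈ l, e ∈ P.E) ∧
      l.length ≤ (Prod.fst '' P.E).ncard} := by
    intro t ht
    obtain ⟨D, _, hfp, _, hnd, _⟩ := hgQ t ht
    refine ⟨VASS.fpath_mem_E hfp, ?_⟩
    have := VASS.nodup_length_le (l := (g t).map Prod.fst) (hEfin.image Prod.fst) hnd ?_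
    · simpa using this
    · intro x hx
      obtain ⟨e, he, rfl⟩ := List.mem_map.1 hx
      exact ⟨e, VASS.fpath_mem_E hfp e he, rfl⟩
  obtain ⟨π, hT'⟩ := VASS.pigeon hT g (VASS.finite_candidates P hEfin _) hgF
  set T' : Set ℕ := {t | t ∈ T ∧ g t = π} with hT'def
  obtain ⟨t0, ht0⟩ := hT'.nonempty
  obtain ⟨D0, hIA0, hfp0, hne0, hnd0, hsub0⟩ : Q t0 π := ht0.2 ▸ hgQ t0 ht0.1
  obtain ⟨hsth0, hstle0, hstmax0⟩ := hstfacts t0 ht0.1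
  -- π is a loop-path at header h
  have hLH : P.LoopHeader entry h := ⟨estar, hBE, rfl⟩
  have hloc : ∀ x, VASS.Visits h π x → ∃ jx, st t0 ≤ jx ∧ jx ≤ t0 ∧ locs jx = x := by
    intro x hvx
    rcases hvx with rfl | ⟨e, he, hex⟩
    · exact ⟨st t0, le_rfl, hstle0, hsth0⟩
    · have he2 := hsub0 e he
      simp only [hσdef] at he2
      rw [hfseg] at he2
      obtain ⟨m2, hm2, rfl⟩ := by simpa [eq_comm] using he2
      simp only [hf] at hex
      by_cases hle : st t0 + m2 + 1 ≤ t0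
      · exact ⟨st t0 + m2 + 1, by omega, hle, hex⟩
      · have : st t0 + m2 + 1 = t0 + 1 := by omega
        rw [this, (hTfacts t0 ht0.1).2] at hex
        exact ⟨st t0, le_rfl, hstle0, by rw [hsth0, hex]⟩
  have hNL : ∀ x, VASS.Visits h π x → x ∈ P.NaturalLoop entry h := by
    intro x hvx
    obtain ⟨jx, hjx1, hjx2, hjx3⟩ := hloc x hvx
    have hxseg : P.FPath x (VASS.pathSeg locs upds jx (t0 - jx)) estar.1 := by
      have := hfpseg (t0 - jx) jx
      rwa [hjx3, show jx + (t0 - jx) = t0 by omega, (hTfacts t0 ht0.1).1] at this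
    have hsegne : ∀ e ∈ VASS.pathSeg locs upds jx (t0 - jx), e.2.2 ≠ h := by
      rw [hfseg]
      intro e he
      obtain ⟨m2, hm2, rfl⟩ := by simpa [eq_comm] using he
      exact hstmax0 (jx + m2 + 1) (by omega) (by omega)
    refine ⟨?_, estar, hBE, rfl, VASS.pathSeg locs upds jx (t0 - jx), hxseg, hsegne⟩
    intro q hq
    by_cases hch : h = entry
    · exact Or.inl hch
    · have hq2 : P.FPath entry (q ++ VASS.pathSeg locs upds jx (t0 - jx)) estar.1 :=
        VASS.fpath_append hq hxseg
      rcases hDom _ hq2 with hv | ⟨e, he, heh⟩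
      · exact absurd hv hch
      · rcases List.mem_append.1 he with he' | he'
        · exact Or.inr ⟨e, he', heh⟩
        · exact absurd heh (hsegne e he')
  refine ⟨h, π, ⟨hLH, hfp0, hne0, hnd0, hNL⟩, ?_⟩
  -- Step 6: infinitely many instance positions
  have hsub2 : st '' T' ⊆ {i : ℕ | ∃ k, 1 ≤ k ∧ ∃ D, P.IsInstance π
      ((List.range k).map (fun m => (locs (i+m), upds (i+m), locs (i+m+1)))) D} := by
    rintro i ⟨t, ht, rfl⟩
    obtain ⟨D, hIA, hfp, hne, _, _⟩ : Q t π := ht.2 ▸ hgQ t ht.1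
    have hstle := (hstfacts t ht.1).2.1
    refine ⟨t + 1 - st t, by omega, D, ?_⟩
    obtain ⟨e, rest, rfl⟩ : ∃ e rest, π = e :: rest := by
      cases π with
      | nil => exact absurd rfl hne
      | cons e t => exact ⟨_, _, rfl⟩
    refine ⟨e, rest, rfl, ?_⟩
    rw [(VASS.fpath_cons hfp).1]
    exact hIA
  have hinj : Set.InjOn st T' := by
    have hmono : ∀ t ∈ T', ∀ t' ∈ T', t < t' → st t < st t' := by
      intro t ht t' ht' hlt
      have h1 : st t ≤ t := (hstfacts t ht.1).2.1
      have h2 : t + 1 ≤ st t' :=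
        Nat.le_findGreatest (by omega) ((hTfacts t ht.1).2)
      omega
    intro t ht t' ht' heq
    rcases lt_trichotomy t t' with hlt | heq' | hlt
    · exact absurd heq (Nat.ne_of_lt (hmono t ht t' ht' hlt))
    · exact heq'
    · exact absurd heq.symm (Nat.ne_of_lt (hmono t' ht' t ht hlt))
  exact (hT'.image hinj).mono hsub2
end
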